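/- Let X be a finite uniform quandle. Then either X is isomorphic to the dihedral quandle R_3, or X is trivial (x ◁ y = x for all x, y). -/

import Mathlib

open Quandles

/-- The setoid on `n`-tuples whose classes are orbits of the diagonal action
of the full symmetric group `X ≃ X`. -/
def symOrbit (X : Type*) (n : ℕ) : Setoid (Fin n → X) where
  r x y := ∃ π : X ≃ X, ∀ i, π (x i) = y i
  iseqv := by
    refine ⟨fun x => ⟨Equiv.refl X, fun i => rfl⟩, ?_, ?_⟩
    · rintro x y ⟨π, h⟩
      exact ⟨π.symm, fun i => by rw [← h i, Equiv.symm_apply_apply]⟩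
    · rintro x y z ⟨π, h⟩ ⟨σ, h'⟩
      exact ⟨π.trans σ, fun i => by simp [Equiv.trans_apply, h i, h' i]⟩

/-- An automorphism of a quandle: a bijection preserving the quandle operation. -/
def IsQuandleAut {X : Type*} [Quandle X] (f : X ≃ X) : Prop :=
  ∀ a b : X, f (a ◃ b) = f a ◃ f b

theorem IsQuandleAut.symm {X : Type*} [Quandle X] {f : X ≃ X} (hf : IsQuandleAut f) :
    IsQuandleAut f.symm := fun a b =>
  f.injective (by rw [Equiv.apply_symm_apply, hf, Equiv.apply_symm_apply, Equiv.apply_symm_apply])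

/-- The setoid on `n`-tuples whose classes are orbits of the diagonal action of
the quandle automorphism group. -/
def autOrbit (X : Type*) [Quandle X] (n : ℕ) : Setoid (Fin n → X) where
  r x y := ∃ f : X ≃ X, IsQuandleAut f ∧ ∀ i, f (x i) = y i
  iseqv := by
    refine ⟨fun x => ⟨Equiv.refl X, fun a b => rfl, fun i => rfl⟩, ?_, ?_⟩
    · rintro x y ⟨f, hf, h⟩
      exact ⟨f.symm, hf.symm, fun i => by rw [← h i, Equiv.symm_apply_apply]⟩
    · rintro x y z ⟨f, hf, h⟩ ⟨g, hg, h'⟩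
      refine ⟨f.trans g, fun a b => ?_, fun i => by simp [Equiv.trans_apply, h i, h' i]⟩
      simp only [Equiv.trans_apply]; rw [hf, hg]

/-- A quandle is `n`-homogeneous if any two `n`-tuples with the same equality
pattern are related by a quandle automorphism. -/
def IsNHomogeneous (X : Type*) [Quandle X] (n : ℕ) : Prop :=
  ∀ x y : Fin n → X, (∀ i j, x i = x j ↔ y i = y j) →
    ∃ f : X ≃ X, IsQuandleAut f ∧ ∀ i, f (x i) = y i

/-- In a uniform quandle, every permutation is a quandle automorphism. -/
lemma allAut {X : Type*} [Quandle X] [Finite X] (h : ∀ n, IsNHomogeneous X n)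
    (π : X ≃ X) : IsQuandleAut π := by
  obtain ⟨n, ⟨e⟩⟩ := Finite.exists_equiv_fin X
  obtain ⟨f, hf, hfe⟩ := h n (fun i => e.symm i) (fun i => π (e.symm i))
    (fun i j => by simp)
  have hfx : ∀ x : X, f x = π x := fun x => by
    have := hfe (e x); simpa using this
  intro a b
  rw [← hfx, ← hfx, ← hfx, hf]

/-- A finite uniform quandle is isomorphic to the dihedral quandle `R₃` or is trivial. -/
theorem stmt13 (X : Type*) [Quandle X] [Finite X] (h : ∀ n, IsNHomogeneous X n) :
    (∃ f : X ≃ Quandle.Dihedral 3, ∀ a b : X, f (a ◃ b) = f a ◃ f b) ∨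
      (∀ a b : X, a ◃ b = b) := by
  classical
  by_cases htriv : ∀ a b : X, a ◃ b = b
  · exact Or.inr htriv
  push_neg at htriv
  obtain ⟨a, b, hab⟩ := htriv
  left
  obtain ⟨c, hc⟩ : ∃ c, a ◃ b = c := ⟨_, rfl⟩
  rw [hc] at hab
  have hLa : Function.Injective (fun z : X => a ◃ z) := (Rack.left_inv a).injective
  have hLb : Function.Injective (fun z : X => b ◃ z) := (Rack.left_inv b).injective
  have hLc : Function.Injective (fun z : X => c ◃ z) := (Rack.left_inv c).injective
  have hba : b ≠ a := by
    intro hba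
    apply hab
    rw [← hc, hba, Quandle.fix]
  have hca : c ≠ a := by
    intro hca
    have : a ◃ b = a ◃ a := by rw [hc, hca, Quandle.fix]
    exact hba (hLa this)
  have hcb : c ≠ b := hab
  -- every element is a, b, or c
  have hcover : ∀ x : X, x = a ∨ x = b ∨ x = c := by
    intro d
    by_contra hd
    push_neg at hd
    obtain ⟨hda, hdb, hdc⟩ := hd
    have hπ := allAut h (Equiv.swap c d)
    have := hπ a b
    rw [Equiv.swap_apply_of_ne_of_ne hca.symm (Ne.symm hda),
      Equiv.swap_apply_of_ne_of_ne hcb.symm (Ne.symm hdb), hc,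
      Equiv.swap_apply_left] at this
    exact hdc this
  -- multiplication table
  have haa : a ◃ a = a := Quandle.fix
  have hbb : b ◃ b = b := Quandle.fix
  have hcc : c ◃ c = c := Quandle.fix
  have hac : a ◃ c = b := by
    rcases hcover (a ◃ c) with h1 | h1 | h1
    · exact absurd (hLa (h1.trans haa.symm)) hca
    · exact h1
    · exact absurd (hLa (h1.trans hc.symm)) hcb
  have hba' : b ◃ a = c := by
    have hπ := allAut h (Equiv.swap a b)
    have := hπ a b
    rw [hc, Equiv.swap_apply_left, Equiv.swap_apply_right,
      Equiv.swap_apply_of_ne_of_ne hca hcb] at this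
    exact this.symm
  have hbc : b ◃ c = a := by
    rcases hcover (b ◃ c) with h1 | h1 | h1
    · exact h1
    · exact absurd (hLb (h1.trans hbb.symm)) hcb
    · exact absurd (hLb (h1.trans hba'.symm)) hca
  have hcb' : c ◃ b = a := by
    have hπ := allAut h (Equiv.swap a c)
    have := hπ a b
    rw [hc, Equiv.swap_apply_left, Equiv.swap_apply_right,
      Equiv.swap_apply_of_ne_of_ne hba hcb.symm] at this
    exact this.symm
  have hca' : c ◃ a = b := by
    rcases hcover (c ◃ a) with h1 | h1 | h1
    · exact absurd (hLc (h1.trans hcb'.symm)) (Ne.symm hba)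
    · exact h1
    · exact absurd (hLc (h1.trans hcc.symm)) (Ne.symm hca)
  -- build the equivalence
  have heinj : Function.Injective (![a, b, c] : Fin 3 → X) := by
    intro u v huv
    fin_cases u <;> fin_cases v <;> simp_all
  have hesurj : Function.Surjective (![a, b, c] : Fin 3 → X) := by
    intro x
    rcases hcover x with rfl | rfl | rfl
    · exact ⟨0, rfl⟩
    · exact ⟨1, rfl⟩
    · exact ⟨2, rfl⟩
  have hebij : Function.Bijective (![a, b, c] : Fin 3 → X) := ⟨heinj, hesurj⟩
  have harith : ∀ u v : Fin 3, Quandle.dihedralAct 3 u v =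
      ![![0, 2, 1], ![2, 1, 0], ![1, 0, 2]] u v := by
    intro u v; fin_cases u <;> fin_cases v <;> rfl
  have key : ∀ u v : Fin 3, (![a, b, c] : Fin 3 → X) u ◃ (![a, b, c] : Fin 3 → X) v =
      (![a, b, c] : Fin 3 → X) (Quandle.dihedralAct 3 u v) := by
    intro u v
    rw [harith]
    fin_cases u <;> fin_cases v <;>
      simp [haa, hc, hac, hba', hbb, hbc, hca', hcb', hcc]
  set E : Fin 3 ≃ X := Equiv.ofBijective _ hebij with hE
  refine ⟨(E.symm : X ≃ Fin 3), ?_⟩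
  intro x y
  obtain ⟨u, rfl⟩ := hesurj x
  obtain ⟨v, rfl⟩ := hesurj y
  have hEe : ∀ w : Fin 3, E.symm ((![a, b, c] : Fin 3 → X) w) = w := fun w =>
    E.symm_apply_apply w
  rw [key u v]
  exact (hEe _).trans (congrArg₂ (fun p q : Fin 3 =>
    Shelf.act (α := Quandle.Dihedral 3) p q) (hEe u) (hEe v)).symm
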